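/- Let n ≥ 5 and k ≥ 4 be integers and let B(n,k) be the (n,k)-banana tree. Then the line graph 𝓛(B(n,k)) is a lower bound block graph and rn(𝓛(B(n,k))) = n(k+6) − 5. -/

import Mathlib

open scoped Classical

namespace RadioLabeling

variable {V : Type*} [Fintype V]

/-- The diameter of a graph: maximum distance between two vertices. -/
noncomputable def diam (G : SimpleGraph V) : ℕ :=
  Finset.univ.sup fun p : V × V => G.dist p.1 p.2

/-- A vertex set `S` induces a 2-connected subgraph: the induced subgraph is connected
and contains no cut-vertex. -/
def TwoConn (G : SimpleGraph V) (S : Set V) : Prop :=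
  (G.induce S).Connected ∧ ∀ v ∈ S, (S \ {v} : Set V) = ∅ ∨ (G.induce (S \ {v})).Connected

/-- A block: a maximal 2-connected induced subgraph. -/
def IsBlock (G : SimpleGraph V) (S : Set V) : Prop :=
  TwoConn G S ∧ ∀ T : Set V, S ⊆ T → TwoConn G T → T = S

/-- A block graph: a connected graph each of whose blocks is a clique. -/
def IsBlockGraph (G : SimpleGraph V) : Prop :=
  G.Connected ∧ ∀ S : Set V, IsBlock G S → G.IsClique S

/-- The weight of `G` at `v`: the sum of distances from `v` to all vertices. -/
noncomputable def wt (G : SimpleGraph V) (v : V) : ℕ := ∑ u : V, G.dist u v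

/-- The set of weight centers: vertices minimizing the weight. -/
def weightCenters (G : SimpleGraph V) : Set V := {v | ∀ u : V, wt G v ≤ wt G u}

/-- `nCloser G v u` = number of vertices strictly closer to `v` than to `u`. -/
noncomputable def nCloser (G : SimpleGraph V) (v u : V) : ℕ :=
  (Finset.univ.filter fun z => G.dist v z < G.dist u z).card

/-- A central vertex: either the unique weight center, or (when there are at least two
weight centers) a vertex of the central block, i.e. of a block containing all weight centers. -/
def IsCentral (G : SimpleGraph V) (w : V) : Prop :=
  weightCenters G = {w} ∨
    (2 ≤ (weightCenters G).ncard ∧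
      ∃ S : Set V, IsBlock G S ∧ weightCenters G ⊆ S ∧ w ∈ S)

/-- The level of a vertex: its distance to a nearest central vertex. -/
noncomputable def level (G : SimpleGraph V) (v : V) : ℕ :=
  sInf {n | ∃ w, IsCentral G w ∧ G.dist v w = n}

/-- The total level of `G`. -/
noncomputable def totalLevel (G : SimpleGraph V) : ℕ := ∑ v : V, level G v

/-- `eps G = 1` if `G` has a unique weight center, `0` otherwise. -/
noncomputable def eps (G : SimpleGraph V) : ℕ :=
  if (weightCenters G).ncard = 1 then 1 else 0

/-- A radio labeling: `|f u - f v| ≥ diam G + 1 - dist u v` for all distinct `u`, `v`. -/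
def IsRadioLabeling (G : SimpleGraph V) (f : V → ℕ) : Prop :=
  ∀ u v : V, u ≠ v → diam G + 1 ≤ G.dist u v + max (f u - f v) (f v - f u)

/-- The span of a labeling: the maximum difference of two labels. -/
noncomputable def span (f : V → ℕ) : ℕ :=
  Finset.univ.sup fun p : V × V => f p.1 - f p.2

/-- The radio number: minimum span of a radio labeling. -/
noncomputable def rn (G : SimpleGraph V) : ℕ :=
  sInf {s | ∃ f : V → ℕ, IsRadioLabeling G f ∧ span f = s}

/-- `G` achieves the lower bound `(p-1)(d(G)+ε(G)) - 2L(G) + ε(G)` for the radio number. -/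
def lbEq (G : SimpleGraph V) : Prop :=
  (rn G : ℤ) =
    ((Fintype.card V : ℤ) - 1) * ((diam G : ℤ) + (eps G : ℤ)) -
      2 * (totalLevel G : ℤ) + (eps G : ℤ)

/-- A lower bound block graph: a block graph whose radio number equals the lower bound. -/
def IsLowerBoundBlockGraph (G : SimpleGraph V) : Prop := IsBlockGraph G ∧ lbEq G

/-- `x` lies on a `(u,v)`-geodesic. -/
def OnGeodesic (G : SimpleGraph V) (x u v : V) : Prop :=
  G.dist u v = G.dist u x + G.dist x v

/-- `x` is an ancestor of `v` (and `v` a descendent of `x`): `x` lies on the geodesic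
from some central vertex to `v`. -/
def IsAncestor (G : SimpleGraph V) (x v : V) : Prop :=
  ∃ w : V, IsCentral G w ∧ OnGeodesic G x w v

/-- `phi G u v`: the maximum level of a common ancestor of `u` and `v`. -/
noncomputable def phi (G : SimpleGraph V) (u v : V) : ℕ :=
  sSup {n | ∃ x, IsAncestor G x u ∧ IsAncestor G x v ∧ level G x = n}

/-- `delta G u v = 1` iff the `(u,v)`-geodesic contains two central vertices. -/
noncomputable def delta (G : SimpleGraph V) (u v : V) : ℕ :=
  if ∃ x y : V, x ≠ y ∧ IsCentral G x ∧ IsCentral G y ∧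
      OnGeodesic G x u v ∧ OnGeodesic G y u v
    then 1 else 0

/-- `rho G u v = 0` iff the `(u,v)`-geodesic contains a central vertex or a common
ancestor of `u` and `v`. -/
noncomputable def rho (G : SimpleGraph V) (u v : V) : ℕ :=
  if ∃ x : V, OnGeodesic G x u v ∧
      (IsCentral G x ∨ (IsAncestor G x u ∧ IsAncestor G x v))
    then 0 else 1

/-- The central block: a block containing at least two weight centers, all of them. -/
def IsCentralBlock (G : SimpleGraph V) (D : Set V) : Prop :=
  IsBlock G D ∧ 2 ≤ (weightCenters G).ncard ∧ weightCenters G ⊆ D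

/-- `v` belongs to the branch of `G` determined by the non-central block `D` adjacent to the
central vertex `w`: `v` is a vertex of `D` other than `w`, or a descendent of such a vertex. -/
def InBranch (G : SimpleGraph V) (w : V) (D : Set V) (v : V) : Prop :=
  IsCentral G w ∧ IsBlock G D ∧ w ∈ D ∧ ¬ IsCentralBlock G D ∧
    ∃ u ∈ D, u ≠ w ∧ IsAncestor G u v

/-- Two vertices are in different branches: branches induced by two different blocks
adjacent to the same central vertex. -/
def DifferentBranches (G : SimpleGraph V) (u v : V) : Prop :=
  ∃ w D₁ D₂, D₁ ≠ D₂ ∧ InBranch G w D₁ u ∧ InBranch G w D₂ v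

/-- Two vertices are in opposite branches: branches induced by blocks adjacent to two
different central vertices. -/
def OppositeBranches (G : SimpleGraph V) (u v : V) : Prop :=
  ∃ w₁ w₂ D₁ D₂, w₁ ≠ w₂ ∧ InBranch G w₁ D₁ u ∧ InBranch G w₂ D₂ v

/-- Two vertices lie in the same branch. -/
def SameBranch (G : SimpleGraph V) (u v : V) : Prop :=
  ∃ w D, InBranch G w D u ∧ InBranch G w D v


noncomputable instance edgeSetFintype (G : SimpleGraph V) : Fintype G.edgeSet :=
  Set.Finite.fintype (Set.toFinite _)

/-- The set `B(T)` of vertices of the line graph of `T` (i.e. edges of `T`): the vertex `w`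
(the unique weight center of the line graph) together with all edges of `T` whose far endpoint
is a descendant, in `T` rooted at its weight center `r`, of the far endpoint of `w`;
equivalently, the edges `e` having an endpoint `x` such that both endpoints of `w` lie on the
`(r,x)`-geodesic in `T`. -/
def edgeDescSet (T : SimpleGraph V) (r : V) (w : T.edgeSet) : Set T.edgeSet :=
  {e | e = w ∨ ∃ x ∈ (e : Sym2 V), ∀ y ∈ (w : Sym2 V), T.dist r x = T.dist r y + T.dist y x}

/-- Vertices of the `(n,k)`-banana tree: the root, the `n` leaves joined to the root,
the `n` star centers, and for each star its remaining `k-2` leaves. -/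
abbrev BananaVert (n k : ℕ) : Type _ := Unit ⊕ Fin n ⊕ Fin n ⊕ (Fin n × Fin (k - 2))

/-- Base adjacency relation of the banana tree: the root is joined to one leaf of each of
`n` copies of the star `K_{1,k-1}`, that leaf is adjacent to the center of its star, and
each center is adjacent to the remaining `k-2` leaves of its star. -/
def bananaRel (n k : ℕ) : BananaVert n k → BananaVert n k → Prop := fun u v =>
  match u, v with
  | Sum.inl _, Sum.inr (Sum.inl _) => True
  | Sum.inr (Sum.inl i), Sum.inr (Sum.inr (Sum.inl i')) => i = i'
  | Sum.inr (Sum.inr (Sum.inl i)), Sum.inr (Sum.inr (Sum.inr (i', _))) => i = i'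
  | _, _ => False

/-- The `(n,k)`-banana tree `B(n,k)`. -/
def bananaTree (n k : ℕ) : SimpleGraph (BananaVert n k) := SimpleGraph.fromRel (bananaRel n k)


section helpers
variable {G : SimpleGraph V}
omit [Fintype V]

lemma induce_adj' {s : Set V} {a b : s} : (G.induce s).Adj a b ↔ G.Adj a b := by
  simp [SimpleGraph.induce, SimpleGraph.comap_adj]

lemma reach_invar {W : Set V} {Q : V → Prop}
    (hQ : ∀ u v : V, G.Adj u v → u ∈ W → v ∈ W → (Q u ↔ Q v)) :
    ∀ {a b : W}, (G.induce W).Reachable a b → (Q a ↔ Q b) := by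
  intro a b h
  obtain ⟨w⟩ := h
  induction w with
  | nil => rfl
  | cons h p ih =>
    rename_i u v _
    exact (hQ u v (induce_adj'.1 h) u.2 v.2).trans ih

lemma clique_induce_connected {S : Set V} (hne : S.Nonempty)
    (h : ∀ x ∈ S, ∀ y ∈ S, x ≠ y → G.Adj x y) : (G.induce S).Connected := by
  rw [SimpleGraph.connected_iff]
  refine ⟨fun a b => ?_, hne.to_subtype⟩
  by_cases hab : a = b
  · rw [hab]
  · exact (induce_adj'.2 (h a a.2 b b.2 (fun hc => hab (Subtype.ext hc)))).reachable
end helpers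

section Banana
variable {n k : ℕ}


variable {n k : ℕ}

/-- vertices -/
def root : BananaVert n k := Sum.inl ()
def leaf (i : Fin n) : BananaVert n k := Sum.inr (Sum.inl i)
def cent (i : Fin n) : BananaVert n k := Sum.inr (Sum.inr (Sum.inl i))
def sleaf (i : Fin n) (t : Fin (k-2)) : BananaVert n k := Sum.inr (Sum.inr (Sum.inr (i, t)))

/-- explicit edge index type -/
abbrev EE (n k : ℕ) : Type _ := Fin n ⊕ Fin n ⊕ (Fin n × Fin (k - 2))

@[match_pattern, reducible] def ea (i : Fin n) : EE n k := Sum.inl i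
@[match_pattern, reducible] def eb (i : Fin n) : EE n k := Sum.inr (Sum.inl i)
@[match_pattern, reducible] def ec (i : Fin n) (t : Fin (k-2)) : EE n k := Sum.inr (Sum.inr (i, t))

def toSym : EE n k → Sym2 (BananaVert n k)
  | ea i => s(root, leaf i)
  | eb i => s(leaf i, cent i)
  | ec i t => s(cent i, sleaf i t)

lemma adj_root_leaf (i : Fin n) : (bananaTree n k).Adj root (leaf i) := by
  rw [bananaTree, SimpleGraph.fromRel_adj]
  exact ⟨by simp [root, leaf], Or.inl trivial⟩

lemma adj_leaf_cent (i : Fin n) : (bananaTree n k).Adj (leaf i) (cent i) := by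
  rw [bananaTree, SimpleGraph.fromRel_adj]
  refine ⟨by simp [cent, leaf], Or.inl rfl⟩

lemma adj_cent_sleaf (i : Fin n) (t : Fin (k-2)) :
    (bananaTree n k).Adj (cent i) (sleaf i t) := by
  rw [bananaTree, SimpleGraph.fromRel_adj]
  refine ⟨by simp [cent, sleaf], Or.inl rfl⟩

lemma toSym_mem (x : EE n k) : toSym x ∈ (bananaTree n k).edgeSet := by
  cases x with
  | inl i => exact (SimpleGraph.mem_edgeSet _).2 (adj_root_leaf i)
  | inr y => cases y with
    | inl i => exact (SimpleGraph.mem_edgeSet _).2 (adj_leaf_cent i)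
    | inr p => exact (SimpleGraph.mem_edgeSet _).2 (adj_cent_sleaf p.1 p.2)

def toE (x : EE n k) : (bananaTree n k).edgeSet := ⟨toSym x, toSym_mem x⟩

lemma toSym_injective : Function.Injective (toSym : EE n k → _) := by
  intro x y h
  cases x with
  | inl i => cases y with
    | inl j =>
      simp only [toSym, ea, Sym2.eq_iff, root, leaf] at h
      rcases h with ⟨_, h⟩ | ⟨h, _⟩ <;> simp_all
    | inr y => cases y with
      | inl j => simp [toSym, ea, eb, Sym2.eq_iff, root, leaf, cent] at h
      | inr p => simp [toSym, ea, ec, Sym2.eq_iff, root, leaf, cent, sleaf] at h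
  | inr x => cases x with
    | inl i => cases y with
      | inl j => simp [toSym, ea, eb, Sym2.eq_iff, root, leaf, cent] at h
      | inr y => cases y with
        | inl j =>
          simp only [toSym, eb, Sym2.eq_iff, leaf, cent] at h
          rcases h with ⟨h, _⟩ | ⟨h, _⟩ <;> simp_all
        | inr p => simp [toSym, eb, ec, Sym2.eq_iff, leaf, cent, sleaf] at h
    | inr p => cases y with
      | inl j => simp [toSym, ea, ec, Sym2.eq_iff, root, leaf, cent, sleaf] at h
      | inr y => cases y with
        | inl j => simp [toSym, eb, ec, Sym2.eq_iff, leaf, cent, sleaf] at h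
        | inr q =>
          obtain ⟨i, t⟩ := p; obtain ⟨j, s⟩ := q
          simp only [toSym, ec, Sym2.eq_iff, cent, sleaf] at h
          rcases h with ⟨h1, h2⟩ | ⟨h1, h2⟩ <;> simp_all

lemma toSym_surjective (e : Sym2 (BananaVert n k)) (he : e ∈ (bananaTree n k).edgeSet) :
    ∃ x : EE n k, toSym x = e := by
  induction e with
  | _ u v =>
    rw [SimpleGraph.mem_edgeSet, bananaTree, SimpleGraph.fromRel_adj] at he
    obtain ⟨hne, h | h⟩ := he
    · match u, v, h with
      | Sum.inl _, Sum.inr (Sum.inl i), _ => exact ⟨ea i, by simp [toSym, ea, root, leaf]⟩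
      | Sum.inr (Sum.inl i), Sum.inr (Sum.inr (Sum.inl i')), h =>
        exact ⟨eb i, by cases h; simp [toSym, eb, leaf, cent]⟩
      | Sum.inr (Sum.inr (Sum.inl i)), Sum.inr (Sum.inr (Sum.inr (i', t))), h =>
        exact ⟨ec i t, by cases h; simp [toSym, ec, cent, sleaf]⟩
    · match u, v, h with
      | Sum.inr (Sum.inl i), Sum.inl _, _ =>
        exact ⟨ea i, by simp [toSym, ea, root, leaf, Sym2.eq_swap]⟩
      | Sum.inr (Sum.inr (Sum.inl i)), Sum.inr (Sum.inl i'), h =>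
        exact ⟨eb i', by cases h; simp [toSym, eb, leaf, cent, Sym2.eq_swap]⟩
      | Sum.inr (Sum.inr (Sum.inr (i', t))), Sum.inr (Sum.inr (Sum.inl i)), h =>
        exact ⟨ec i t, by cases h; simp [toSym, ec, cent, sleaf, Sym2.eq_swap]⟩

lemma toE_bijective : Function.Bijective (toE : EE n k → _) := by
  constructor
  · intro x y h
    exact toSym_injective (congrArg Subtype.val h)
  · rintro ⟨e, he⟩
    obtain ⟨x, hx⟩ := toSym_surjective e he
    exact ⟨x, Subtype.ext hx⟩

noncomputable def ε : EE n k ≃ (bananaTree n k).edgeSet := Equiv.ofBijective _ toE_bijective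

/-- adjacency in the line graph, explicitly -/
def adjE : EE n k → EE n k → Prop
  | ea i, ea j => i ≠ j
  | ea i, eb j => i = j
  | eb i, ea j => i = j
  | eb _, eb _ => False
  | eb i, ec j _ => i = j
  | ec j _, eb i => i = j
  | ec i t, ec j s => i = j ∧ t ≠ s
  | ea _, ec _ _ => False
  | ec _ _, ea _ => False

lemma lineAdj_iff (x y : EE n k) :
    (SimpleGraph.lineGraph (bananaTree n k)).Adj (toE x) (toE y) ↔ adjE x y := by
  rw [SimpleGraph.lineGraph_adj_iff_exists]
  have hne : (toE x ≠ toE y) ↔ x ≠ y := by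
    constructor
    · intro h h'; exact h (by rw [h'])
    · intro h h'; exact h (toSym_injective (congrArg Subtype.val h'))
  rw [hne]
  obtain ⟨i⟩ | ⟨i⟩ | ⟨i, t⟩ := x <;> obtain ⟨j⟩ | ⟨j⟩ | ⟨j, s⟩ := y <;>
    simp [toE, toSym, adjE, ea, eb, ec, root, leaf, cent, sleaf, Sym2.mem_iff] <;> aesop

abbrev LG (n k : ℕ) := SimpleGraph.lineGraph (bananaTree n k)

/-- explicit distance in the line graph -/
def D : EE n k → EE n k → ℕ
  | ea i, ea j => if i = j then 0 else 1
  | ea i, eb j => if i = j then 1 else 2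
  | eb i, ea j => if i = j then 1 else 2
  | eb i, eb j => if i = j then 0 else 3
  | ea i, ec j _ => if i = j then 2 else 3
  | ec j _, ea i => if i = j then 2 else 3
  | eb i, ec j _ => if i = j then 1 else 4
  | ec j _, eb i => if i = j then 1 else 4
  | ec i t, ec j s => if i = j then (if t = s then 0 else 1) else 5

lemma D_self (x : EE n k) : D x x = 0 := by
  obtain ⟨i⟩ | ⟨i⟩ | ⟨i, t⟩ := x <;> simp [D, ea, eb, ec]

lemma D_comm (x y : EE n k) : D x y = D y x := by
  obtain ⟨i⟩ | ⟨i⟩ | ⟨i, t⟩ := x <;> obtain ⟨j⟩ | ⟨j⟩ | ⟨j, s⟩ := y <;>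
    simp only [D, ea, eb, ec] <;> split_ifs <;> simp_all

lemma D_le_five (x y : EE n k) : D x y ≤ 5 := by
  obtain ⟨i⟩ | ⟨i⟩ | ⟨i, t⟩ := x <;> obtain ⟨j⟩ | ⟨j⟩ | ⟨j, s⟩ := y <;>
    simp only [D, ea, eb, ec] <;> split_ifs <;> omega

lemma D_pos (x y : EE n k) (h : x ≠ y) : 1 ≤ D x y := by
  obtain ⟨i⟩ | ⟨i⟩ | ⟨i, t⟩ := x <;> obtain ⟨j⟩ | ⟨j⟩ | ⟨j, s⟩ := y <;>
    simp only [D, ea, eb, ec] <;> split_ifs <;> simp_all [ea, eb, ec] <;> omega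

lemma lip {x z : EE n k} (h : adjE x z) : ∀ y, D x y ≤ D z y + 1 := by
  intro y
  obtain ⟨i⟩ | ⟨i⟩ | ⟨i, t⟩ := x <;> obtain ⟨m⟩ | ⟨m⟩ | ⟨m, r⟩ := z <;>
    simp only [adjE, ea, eb, ec] at h <;>
    obtain ⟨j⟩ | ⟨j⟩ | ⟨j, s⟩ := y <;>
    simp only [D, ea, eb, ec] <;> split_ifs <;> simp_all <;> omega

lemma adjE_symm {x y : EE n k} (h : adjE x y) : adjE y x := by
  obtain ⟨i⟩ | ⟨i⟩ | ⟨i, t⟩ := x <;> obtain ⟨j⟩ | ⟨j⟩ | ⟨j, s⟩ := y <;>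
    simp_all [adjE, ea, eb, ec] <;> tauto

section conn
variable (hn : 5 ≤ n)

def i0 (h5 : 5 ≤ n) : Fin n := ⟨0, lt_of_lt_of_le (by norm_num) h5⟩

include hn

lemma reach_a (i : Fin n) : (LG n k).Reachable (toE (ea i)) (toE (ea (i0 hn))) := by
  by_cases h : i = i0 hn
  · rw [h]
  · exact ((lineAdj_iff _ _).2 (by simpa [adjE, ea] using h)).reachable

lemma reach_anchor (x : EE n k) : (LG n k).Reachable (toE x) (toE (ea (i0 hn))) := by
  obtain ⟨i⟩ | ⟨i⟩ | ⟨i, t⟩ := x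
  · exact reach_a hn i
  · exact (((lineAdj_iff (eb i) (ea i)).2 (by simp [adjE, ea, eb])).reachable).trans (reach_a hn i)
  · refine (((lineAdj_iff (ec i t) (eb i)).2 (by simp [adjE, eb, ec])).reachable).trans ?_
    exact (((lineAdj_iff (eb i) (ea i)).2 (by simp [adjE, ea, eb])).reachable).trans (reach_a hn i)

lemma Gconn : (LG n k).Connected := by
  rw [SimpleGraph.connected_iff]
  refine ⟨fun u v => ?_, ⟨toE (ea (i0 hn))⟩⟩
  obtain ⟨x, rfl⟩ := toE_bijective.2 u
  obtain ⟨y, rfl⟩ := toE_bijective.2 v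
  exact (reach_anchor hn x).trans (reach_anchor hn y).symm

/-- triangle step helper -/
lemma tri {x y z : EE n k} {m : ℕ} (h : adjE x y)
    (h2 : (LG n k).dist (toE y) (toE z) ≤ m) : (LG n k).dist (toE x) (toE z) ≤ m + 1 := by
  calc (LG n k).dist (toE x) (toE z) ≤ (LG n k).dist (toE x) (toE y) + (LG n k).dist (toE y) (toE z) :=
        (Gconn hn).dist_triangle
    _ ≤ 1 + m := by
        refine add_le_add ?_ h2
        have : (LG n k).Adj (toE x) (toE y) := (lineAdj_iff _ _).2 h
        exact SimpleGraph.dist_le (SimpleGraph.Walk.cons this SimpleGraph.Walk.nil)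
    _ = m + 1 := by omega

omit hn in lemma dzero (x : EE n k) : (LG n k).dist (toE x) (toE x) = 0 := SimpleGraph.dist_self

lemma dist_le_D (x y : EE n k) : (LG n k).dist (toE x) (toE y) ≤ D x y := by
  have t0 : ∀ z : EE n k, (LG n k).dist (toE z) (toE z) ≤ 0 := fun z => le_of_eq (dzero z)
  obtain ⟨i⟩ | ⟨i⟩ | ⟨i, t⟩ := x <;> obtain ⟨j⟩ | ⟨j⟩ | ⟨j, s⟩ := y <;>
    simp only [D, ea, eb, ec] <;> split_ifs <;> try subst_vars
  · exact t0 _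
  case _ h =>
    exact tri hn (show adjE (ea i) (ea j) by first | exact h | exact Ne.symm h) (t0 _)
  · exact tri hn (show adjE (ea j) (eb j) from rfl) (t0 _)
  case _ h =>
    exact tri hn (show adjE (ea i) (ea j) by first | exact h | exact Ne.symm h)
      (tri hn (show adjE (ea j) (eb j) from rfl) (t0 _))
  · exact tri hn (show adjE (ea j) (eb j) from rfl)
      (tri hn (show adjE (eb j) (ec j s) from rfl) (t0 _))
  case _ h =>
    exact tri hn (show adjE (ea i) (ea j) by first | exact h | exact Ne.symm h)
      (tri hn (show adjE (ea j) (eb j) from rfl)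
        (tri hn (show adjE (eb j) (ec j s) from rfl) (t0 _)))
  · exact tri hn (show adjE (eb j) (ea j) from rfl) (t0 _)
  case _ h =>
    exact tri hn (show adjE (eb i) (ea i) from rfl)
      (tri hn (show adjE (ea i) (ea j) by first | exact h | exact Ne.symm h) (t0 _))
  · exact t0 _
  case _ h =>
    exact tri hn (show adjE (eb i) (ea i) from rfl)
      (tri hn (show adjE (ea i) (ea j) by first | exact h | exact Ne.symm h)
        (tri hn (show adjE (ea j) (eb j) from rfl) (t0 _)))
  · exact tri hn (show adjE (eb j) (ec j s) from rfl) (t0 _)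
  case _ h =>
    exact tri hn (show adjE (eb i) (ea i) from rfl)
      (tri hn (show adjE (ea i) (ea j) by first | exact h | exact Ne.symm h)
        (tri hn (show adjE (ea j) (eb j) from rfl)
          (tri hn (show adjE (eb j) (ec j s) from rfl) (t0 _))))
  · exact tri hn (show adjE (ec j t) (eb j) from rfl)
      (tri hn (show adjE (eb j) (ea j) from rfl) (t0 _))
  case _ h =>
    exact tri hn (show adjE (ec i t) (eb i) from rfl)
      (tri hn (show adjE (eb i) (ea i) from rfl)
        (tri hn (show adjE (ea i) (ea j) by first | exact h | exact Ne.symm h) (t0 _)))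
  · exact tri hn (show adjE (ec j t) (eb j) from rfl) (t0 _)
  case _ h =>
    exact tri hn (show adjE (ec i t) (eb i) from rfl)
      (tri hn (show adjE (eb i) (ea i) from rfl)
        (tri hn (show adjE (ea i) (ea j) by first | exact h | exact Ne.symm h)
          (tri hn (show adjE (ea j) (eb j) from rfl) (t0 _))))
  · exact t0 _
  case _ h =>
    exact tri hn (show adjE (ec _ t) (ec _ s) from ⟨rfl, h⟩) (t0 _)
  case _ h =>
    exact tri hn (show adjE (ec i t) (eb i) from rfl)
      (tri hn (show adjE (eb i) (ea i) from rfl)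
        (tri hn (show adjE (ea i) (ea j) by first | exact h | exact Ne.symm h)
          (tri hn (show adjE (ea j) (eb j) from rfl)
            (tri hn (show adjE (eb j) (ec j s) from rfl) (t0 _)))))

omit hn in lemma walk_ge : ∀ (a b : (bananaTree n k).edgeSet) (w : (LG n k).Walk a b) (x y : EE n k),
    toE x = a → toE y = b → D x y ≤ w.length := by
  intro a b w
  induction w with
  | nil =>
    intro x y hx hy
    have : x = y := toE_bijective.1 (hx.trans hy.symm)
    simp [this, D_self]
  | cons h p ih =>
    rename_i u v c
    intro x y hx hy
    obtain ⟨z, hz⟩ := toE_bijective.2 v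
    have hadj : adjE x z := by
      rw [← lineAdj_iff]; rw [hx, hz]; exact h
    calc D x y ≤ D z y + 1 := lip hadj y
      _ ≤ p.length + 1 := by have := ih z y hz hy; omega
      _ = (SimpleGraph.Walk.cons h p).length := (SimpleGraph.Walk.length_cons _ _).symm

lemma D_le_dist (x y : EE n k) : D x y ≤ (LG n k).dist (toE x) (toE y) := by
  obtain ⟨w, hw⟩ := ((Gconn hn).preconnected (toE x) (toE y)).exists_walk_length_eq_dist
  rw [← hw]
  exact walk_ge _ _ w x y rfl rfl

lemma dist_eq_D (x y : EE n k) : (LG n k).dist (toE x) (toE y) = D x y :=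
  le_antisymm (dist_le_D hn x y) (D_le_dist hn x y)

end conn

def tailP (j : Fin n) : EE n k → Prop
  | eb i => i = j
  | ec i _ => i = j
  | ea _ => False

def cbanP (j : Fin n) : EE n k → Prop
  | ec i _ => i = j
  | _ => False

lemma tail_inv (j : Fin n) : ∀ u v : EE n k, adjE u v → u ≠ ea j → v ≠ ea j →
    (tailP j u ↔ tailP j v) := by
  intro u v h hu hv
  obtain ⟨i⟩ | ⟨i⟩ | ⟨i, t⟩ := u <;> obtain ⟨i'⟩ | ⟨i'⟩ | ⟨i', s⟩ := v <;>
    simp_all [adjE, tailP, ea, eb, ec] <;> (try subst_vars) <;>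
    (intro h'; subst h'; first | exact hu rfl | exact hv rfl)

lemma cban_inv (j : Fin n) : ∀ u v : EE n k, adjE u v → u ≠ eb j → v ≠ eb j →
    (cbanP j u ↔ cbanP j v) := by
  intro u v h hu hv
  obtain ⟨i⟩ | ⟨i⟩ | ⟨i, t⟩ := u <;> obtain ⟨i'⟩ | ⟨i'⟩ | ⟨i', s⟩ := v <;>
    simp_all [adjE, cbanP, ea, eb, ec] <;> (try subst_vars) <;>
    (intro h'; subst h'; first | exact hu rfl | exact hv rfl)

lemma sep {x y : EE n k} (hne : x ≠ y) (hna : ¬ adjE x y) :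
    ∃ (m : EE n k) (P : EE n k → Prop), m ≠ x ∧ m ≠ y ∧
      (∀ u v : EE n k, adjE u v → u ≠ m → v ≠ m → (P u ↔ P v)) ∧ ¬ P x ∧ P y := by
  obtain ⟨i⟩ | ⟨i⟩ | ⟨i, t⟩ := x <;> obtain ⟨j⟩ | ⟨j⟩ | ⟨j, s⟩ := y
  · exact absurd (show adjE (ea i) (ea j) from fun h => hne (by rw [h])) hna
  · -- ea i, eb j
    have hij : i ≠ j := fun h => hna (h : adjE (ea i) (eb j))
    exact ⟨ea j, tailP j, by simp [ea, Ne, hij.symm], by simp [ea, eb],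
      tail_inv j, by simp [tailP], by simp [tailP]⟩
  · exact ⟨eb j, cbanP j, by simp [ea, eb], by simp [eb, ec],
      cban_inv j, by simp [cbanP], by simp [cbanP]⟩
  · -- eb i, ea j
    have hij : i ≠ j := fun h => hna (h : adjE (eb i) (ea j))
    refine ⟨ea i, fun u => ¬ tailP i u, by simp [ea, eb], by simp [ea, Ne, hij],
      fun u v h hu hv => not_iff_not.2 (tail_inv i u v h hu hv), by simp [tailP], by simp [tailP]⟩
  · -- eb i, eb j
    have hij : i ≠ j := by simpa [eb] using hne
    exact ⟨ea j, tailP j, by simp [ea, eb], by simp [ea, eb],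
      tail_inv j, by simp [tailP, hij], by simp [tailP]⟩
  · -- eb i, ec j s
    have hij : i ≠ j := fun h => hna (h : adjE (eb i) (ec j s))
    exact ⟨eb j, cbanP j, by simp [eb, Ne, hij.symm], by simp [eb, ec],
      cban_inv j, by simp [cbanP], by simp [cbanP]⟩
  · -- ec i t, ea j
    refine ⟨eb i, fun u => ¬ cbanP i u, by simp [eb, ec], by simp [ea, eb],
      fun u v h hu hv => not_iff_not.2 (cban_inv i u v h hu hv), by simp [cbanP], by simp [cbanP]⟩
  · -- ec i t, eb j
    have hij : j ≠ i := fun h => hna (h : adjE (ec i t) (eb j))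
    refine ⟨eb i, fun u => ¬ cbanP i u, by simp [eb, ec], by simp [eb, Ne, hij.symm],
      fun u v h hu hv => not_iff_not.2 (cban_inv i u v h hu hv), by simp [cbanP], by simp [cbanP]⟩
  · -- ec i t, ec j s
    have hij : i ≠ j := by
      intro h; subst h
      by_cases hts : t = s
      · exact hne (by rw [hts])
      · exact hna (⟨rfl, hts⟩ : adjE (ec i t) (ec i s))
    exact ⟨eb j, cbanP j, by simp [eb, ec], by simp [eb, ec],
      cban_inv j, by simp [cbanP, hij], by simp [cbanP]⟩

/-- every 2-connected set in the line graph is a clique -/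
lemma twoConn_clique {S : Set ((bananaTree n k).edgeSet)} (hS : TwoConn (LG n k) S) :
    ∀ x ∈ S, ∀ y ∈ S, x ≠ y → (LG n k).Adj x y := by
  intro x hx y hy hne
  by_contra hnadj
  obtain ⟨x', rfl⟩ := toE_bijective.2 x
  obtain ⟨y', rfl⟩ := toE_bijective.2 y
  have hne' : x' ≠ y' := fun h => hne (by rw [h])
  have hnadj' : ¬ adjE x' y' := fun h => hnadj ((lineAdj_iff _ _).2 h)
  obtain ⟨m, P, hmx, hmy, hinv, hPx, hPy⟩ := sep hne' hnadj'
  set Q : (bananaTree n k).edgeSet → Prop := fun e => ∃ z, toE z = e ∧ P z with hQdef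
  have hQ : ∀ z : EE n k, (Q (toE z) ↔ P z) := by
    intro z
    constructor
    · rintro ⟨z', hz', hP⟩
      rwa [toE_bijective.1 hz'] at hP
    · exact fun h => ⟨z, rfl, h⟩
  have hQinv : ∀ u v : (bananaTree n k).edgeSet, (LG n k).Adj u v →
      u ≠ toE m → v ≠ toE m → (Q u ↔ Q v) := by
    intro u v huv hu hv
    obtain ⟨u', rfl⟩ := toE_bijective.2 u
    obtain ⟨v', rfl⟩ := toE_bijective.2 v
    rw [hQ, hQ]
    exact hinv u' v' ((lineAdj_iff _ _).1 huv)
      (fun h => hu (by rw [h])) (fun h => hv (by rw [h]))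
  by_cases hm : toE m ∈ S
  · rcases hS.2 (toE m) hm with hemp | hconn
    · have : toE x' ∈ S \ {toE m} := ⟨hx, fun h => hmx (toE_bijective.1 (by simpa using h)).symm⟩
      rw [hemp] at this
      exact this
    · have hxW : toE x' ∈ S \ {toE m} :=
        ⟨hx, fun h => hmx (toE_bijective.1 (by simpa using h)).symm⟩
      have hyW : toE y' ∈ S \ {toE m} :=
        ⟨hy, fun h => hmy (toE_bijective.1 (by simpa using h)).symm⟩
      have hreach := hconn.preconnected ⟨toE x', hxW⟩ ⟨toE y', hyW⟩
      have := reach_invar (G := LG n k) (W := S \ {toE m}) (Q := Q)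
        (fun u v huv hu hv => hQinv u v huv
          (fun h => hu.2 (by simp [h])) (fun h => hv.2 (by simp [h]))) hreach
      rw [hQ, hQ] at this
      exact hPx (this.2 hPy)
  · have hreach := hS.1.preconnected ⟨toE x', hx⟩ ⟨toE y', hy⟩
    have := reach_invar (G := LG n k) (W := S) (Q := Q)
      (fun u v huv hu hv => hQinv u v huv
        (fun h => hm (h ▸ hu)) (fun h => hm (h ▸ hv))) hreach
    rw [hQ, hQ] at this
    exact hPx (this.2 hPy)

lemma lg_isBlockGraph (hn : 5 ≤ n) : IsBlockGraph (LG n k) := by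
  refine ⟨Gconn hn, fun S hS => ?_⟩
  intro x hx y hy hne
  exact twoConn_clique hS.1 x hx y hy hne

/-- the central clique -/
def Aset (n k : ℕ) : Set ((bananaTree n k).edgeSet) := Set.range (fun i : Fin n => toE (ea i))

lemma adj_aa (hn : 5 ≤ n) {i j : Fin n} (h : i ≠ j) :
    (LG n k).Adj (toE (ea i)) (toE (ea j)) := (lineAdj_iff _ _).2 h

lemma Aset_pairwise : ∀ x ∈ Aset n k, ∀ y ∈ Aset n k, x ≠ y → (LG n k).Adj x y := by
  rintro x ⟨i, rfl⟩ y ⟨j, rfl⟩ hne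
  exact (lineAdj_iff _ _).2 (show adjE (ea i) (ea j) from fun h => hne (by rw [h]))

lemma other_index (hn : 5 ≤ n) (i : Fin n) : ∃ j : Fin n, j ≠ i := by
  by_cases h : i = i0 hn
  · exact ⟨⟨1, by omega⟩, by subst h; simp [i0, Fin.ext_iff]⟩
  · exact ⟨i0 hn, fun hc => h hc.symm⟩

lemma Aset_twoConn (hn : 5 ≤ n) : TwoConn (LG n k) (Aset n k) := by
  constructor
  · exact clique_induce_connected ⟨toE (ea (i0 hn)), ⟨i0 hn, rfl⟩⟩ Aset_pairwise
  · rintro v ⟨i, rfl⟩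
    right
    refine clique_induce_connected ?_ (fun x hx y hy hne => Aset_pairwise x hx.1 y hy.1 hne)
    obtain ⟨j, hj⟩ := other_index hn i
    refine ⟨toE (ea j), ⟨j, rfl⟩, ?_⟩
    simp only [Set.mem_singleton_iff]
    intro h
    apply hj
    have := toE_bijective.1 h
    simpa [ea] using this

lemma mem_Aset_cases {u : (bananaTree n k).edgeSet} : u ∈ Aset n k ↔ ∃ i, toE (ea i) = u :=
  Iff.rfl

lemma twoConn_superset_Aset (hn : 5 ≤ n) {T : Set ((bananaTree n k).edgeSet)}
    (hsub : Aset n k ⊆ T) (hT : TwoConn (LG n k) T) : T = Aset n k := by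
  refine Set.Subset.antisymm (fun u hu => ?_) hsub
  obtain ⟨z, rfl⟩ := toE_bijective.2 u
  obtain ⟨i⟩ | ⟨i⟩ | ⟨i, t⟩ := z
  · exact ⟨i, rfl⟩
  · exfalso
    obtain ⟨j, hj⟩ := other_index hn i
    have hmem : toE (ea j) ∈ T := hsub ⟨j, rfl⟩
    have hne : (toE (eb i) : (bananaTree n k).edgeSet) ≠ toE (ea j) := by
      intro h
      have := toE_bijective.1 h
      simp [ea, eb] at this
    have hadj := (lineAdj_iff _ _).1 (twoConn_clique hT _ hu _ hmem hne)
    have : i = j := hadj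
    exact hj this.symm
  · obtain ⟨j, hj⟩ := other_index hn (i0 hn)
    have hmem : toE (ea (i0 hn)) ∈ T := hsub ⟨i0 hn, rfl⟩
    have hne : (toE (ec i t) : (bananaTree n k).edgeSet) ≠ toE (ea (i0 hn)) := by
      intro h
      have := toE_bijective.1 h
      simp [ea, ec] at this
    exact absurd ((lineAdj_iff _ _).1 (twoConn_clique hT _ hu _ hmem hne)) (by simp [adjE, ea, ec])

lemma Aset_isBlock (hn : 5 ≤ n) : IsBlock (LG n k) (Aset n k) :=
  ⟨Aset_twoConn hn, fun T hsub hT => twoConn_superset_Aset hn hsub hT⟩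


lemma sum_ite_fin {N : ℕ} (m : Fin N) (x y : ℕ) :
    (∑ i : Fin N, if i = m then x else y) = x + (N-1) * y := by
  classical
  rw [← Finset.sum_filter_add_sum_filter_not Finset.univ (fun i => i = m)]
  rw [Finset.filter_eq' Finset.univ m, if_pos (Finset.mem_univ m)]
  have h2 : Finset.filter (fun i => ¬ i = m) Finset.univ = Finset.univ.erase m := by
    simpa using Finset.filter_ne' Finset.univ m
  rw [h2, Finset.sum_singleton, if_pos rfl]
  rw [Finset.sum_congr rfl (fun i hi => if_neg (Finset.ne_of_mem_erase hi))]
  rw [Finset.sum_const, Finset.card_erase_of_mem (Finset.mem_univ m), Finset.card_univ,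
    Fintype.card_fin, smul_eq_mul]

lemma sum_ite_fin' {N : ℕ} (m : Fin N) (x y : ℕ) :
    (∑ i : Fin N, if m = i then x else y) = x + (N-1) * y := by
  rw [← sum_ite_fin m x y]
  refine Finset.sum_congr rfl (fun i _ => ?_)
  by_cases h : i = m
  · simp [h]
  · rw [if_neg h, if_neg (fun hh => h hh.symm)]

lemma wt_eq (hn : 5 ≤ n) (z : EE n k) :
    wt (LG n k) (toE z) = ∑ x : EE n k, D x z := by
  unfold wt
  exact (Fintype.sum_bijective toE toE_bijective (fun x => D x z)
    (fun u => (LG n k).dist u (toE z)) (fun x => (dist_eq_D hn x z).symm)).symm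

lemma sum_D_a (m : Fin n) :
    ∑ x : EE n k, D x (ea m) = ((n-1)) + ((1 + (n-1)*2) + ((k-2)*2 + (n-1)*((k-2)*3))) := by
  rw [Fintype.sum_sum_type, Fintype.sum_sum_type, Fintype.sum_prod_type]
  congr 1
  · simpa [D, ea] using sum_ite_fin m 0 1
  congr 1
  · exact sum_ite_fin m 1 2
  · calc ∑ i : Fin n, ∑ t : Fin (k-2), D (ec i t) (ea m)
        = ∑ i : Fin n, (if m = i then (k-2)*2 else (k-2)*3) := by
          refine Finset.sum_congr rfl (fun i _ => ?_)
          by_cases h : m = i <;>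
            simp [D, ea, ec, h, Finset.sum_const, Finset.card_univ, mul_comm]
      _ = (k-2)*2 + (n-1)*((k-2)*3) := sum_ite_fin' m _ _

lemma sum_D_b (m : Fin n) :
    ∑ x : EE n k, D x (eb m) = ((1 + (n-1)*2)) + ((n-1)*3 + ((k-2)*1 + (n-1)*((k-2)*4))) := by
  rw [Fintype.sum_sum_type, Fintype.sum_sum_type, Fintype.sum_prod_type]
  congr 1
  · exact sum_ite_fin m 1 2
  congr 1
  · simpa [D, eb] using sum_ite_fin m 0 3
  · calc ∑ i : Fin n, ∑ t : Fin (k-2), D (ec i t) (eb m)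
        = ∑ i : Fin n, (if m = i then (k-2)*1 else (k-2)*4) := by
          refine Finset.sum_congr rfl (fun i _ => ?_)
          by_cases h : m = i <;>
            simp [D, eb, ec, h, Finset.sum_const, Finset.card_univ, mul_comm]
      _ = (k-2)*1 + (n-1)*((k-2)*4) := sum_ite_fin' m _ _

lemma sum_D_c (m : Fin n) (s : Fin (k-2)) :
    ∑ x : EE n k, D x (ec m s)
      = ((2 + (n-1)*3)) + ((1 + (n-1)*4) + (((k-2)-1) + (n-1)*((k-2)*5))) := by
  rw [Fintype.sum_sum_type, Fintype.sum_sum_type, Fintype.sum_prod_type]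
  congr 1
  · exact sum_ite_fin m 2 3
  congr 1
  · exact sum_ite_fin m 1 4
  · calc ∑ i : Fin n, ∑ t : Fin (k-2), D (ec i t) (ec m s)
        = ∑ i : Fin n, (if i = m then ((k-2)-1) else (k-2)*5) := by
          refine Finset.sum_congr rfl (fun i _ => ?_)
          by_cases h : i = m
          · subst h
            rw [if_pos rfl]
            simp only [D, ec, if_pos rfl]
            simpa using sum_ite_fin s 0 1
          · rw [if_neg h]
            simp only [D, ec, if_neg h]
            simp [Finset.sum_const, Finset.card_univ, mul_comm]
      _ = ((k-2)-1) + (n-1)*((k-2)*5) := sum_ite_fin m _ _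

lemma wA_lt_wB (hn : 5 ≤ n) (hk : 4 ≤ k) (m m' : Fin n) :
    wt (LG n k) (toE (ea m)) < wt (LG n k) (toE (eb m')) := by
  rw [wt_eq hn, wt_eq hn, sum_D_a, sum_D_b]
  obtain ⟨a, ha⟩ : ∃ a, n - 1 = a + 4 := ⟨n - 5, by omega⟩
  obtain ⟨b, hb⟩ : ∃ b, k - 2 = b + 2 := ⟨k - 4, by omega⟩
  rw [ha, hb]
  nlinarith [a.zero_le, b.zero_le]

lemma wA_lt_wC (hn : 5 ≤ n) (hk : 4 ≤ k) (m m' : Fin n) (s : Fin (k-2)) :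
    wt (LG n k) (toE (ea m)) < wt (LG n k) (toE (ec m' s)) := by
  rw [wt_eq hn, wt_eq hn, sum_D_a, sum_D_c]
  obtain ⟨a, ha⟩ : ∃ a, n - 1 = a + 4 := ⟨n - 5, by omega⟩
  obtain ⟨b, hb⟩ : ∃ b, k - 2 = b + 2 := ⟨k - 4, by omega⟩
  rw [ha, hb]
  nlinarith [a.zero_le, b.zero_le]

lemma wc_eq (hn : 5 ≤ n) (hk : 4 ≤ k) : weightCenters (LG n k) = Aset n k := by
  ext v
  obtain ⟨z, rfl⟩ := toE_bijective.2 v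
  obtain ⟨i⟩ | ⟨i⟩ | ⟨i, t⟩ := z
  · refine iff_of_true (fun u => ?_) ⟨i, rfl⟩
    obtain ⟨z', rfl⟩ := toE_bijective.2 u
    obtain ⟨j⟩ | ⟨j⟩ | ⟨j, s⟩ := z'
    · rw [wt_eq hn, wt_eq hn]
      simp only [sum_D_a]
      exact le_refl _
    · exact le_of_lt (wA_lt_wB hn hk _ _)
    · exact le_of_lt (wA_lt_wC hn hk _ _ _)
  · refine iff_of_false (fun hc => ?_) (fun hc => ?_)
    · exact absurd (hc (toE (ea (i0 hn)))) (not_le.2 (wA_lt_wB hn hk _ _))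
    · obtain ⟨j, hj⟩ := hc
      have := toE_bijective.1 hj
      simp [ea, eb] at this
  · refine iff_of_false (fun hc => ?_) (fun hc => ?_)
    · exact absurd (hc (toE (ea (i0 hn)))) (not_le.2 (wA_lt_wC hn hk _ _ _))
    · obtain ⟨j, hj⟩ := hc
      have := toE_bijective.1 hj
      simp [ea, ec] at this

lemma Aset_ncard (hn : 5 ≤ n) : (Aset n k).ncard = n := by
  have hinj : Function.Injective (fun i : Fin n => (toE (ea i) : (bananaTree n k).edgeSet)) := by
    intro i j h
    have := toE_bijective.1 h
    simpa [ea] using this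
  rw [Aset, ← Nat.card_coe_set_eq, Nat.card_range_of_injective hinj,
    Nat.card_eq_fintype_card, Fintype.card_fin]

lemma eps_eq (hn : 5 ≤ n) (hk : 4 ≤ k) : eps (LG n k) = 0 := by
  unfold eps
  rw [wc_eq hn hk, Aset_ncard hn]
  rw [if_neg (by omega)]

lemma central_iff (hn : 5 ≤ n) (hk : 4 ≤ k) (w : (bananaTree n k).edgeSet) :
    IsCentral (LG n k) w ↔ w ∈ Aset n k := by
  constructor
  · rintro (h | ⟨_, S, hblock, hsub, hw⟩)
    · exfalso
      have h1 : (weightCenters (LG n k)).ncard = 1 := by rw [h]; simp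
      rw [wc_eq hn hk, Aset_ncard hn] at h1
      omega
    · rw [wc_eq hn hk] at hsub
      rwa [twoConn_superset_Aset hn hsub hblock.1] at hw
  · intro hw
    right
    refine ⟨by rw [wc_eq hn hk, Aset_ncard hn]; omega, Aset n k, Aset_isBlock hn,
      by rw [wc_eq hn hk], hw⟩

lemma level_a (hn : 5 ≤ n) (hk : 4 ≤ k) (m : Fin n) : level (LG n k) (toE (ea m)) = 0 := by
  unfold level
  rw [Nat.sInf_eq_zero]
  exact Or.inl ⟨toE (ea m), (central_iff hn hk _).2 ⟨m, rfl⟩, by rw [dist_eq_D hn, D_self]⟩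

lemma level_b (hn : 5 ≤ n) (hk : 4 ≤ k) (m : Fin n) : level (LG n k) (toE (eb m)) = 1 := by
  unfold level
  have hmem : 1 ∈ {d | ∃ w, IsCentral (LG n k) w ∧ (LG n k).dist (toE (eb m)) w = d} :=
    ⟨toE (ea m), (central_iff hn hk _).2 ⟨m, rfl⟩, by rw [dist_eq_D hn]; simp [D, ea, eb]⟩
  refine le_antisymm (Nat.sInf_le hmem) (le_csInf ⟨1, hmem⟩ ?_)
  rintro d ⟨w, hw, rfl⟩
  obtain ⟨j, rfl⟩ := (central_iff hn hk _).1 hw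
  rw [dist_eq_D hn]
  simp only [D, ea, eb]
  split_ifs <;> omega

lemma level_c (hn : 5 ≤ n) (hk : 4 ≤ k) (m : Fin n) (s : Fin (k-2)) :
    level (LG n k) (toE (ec m s)) = 2 := by
  unfold level
  have hmem : 2 ∈ {d | ∃ w, IsCentral (LG n k) w ∧ (LG n k).dist (toE (ec m s)) w = d} :=
    ⟨toE (ea m), (central_iff hn hk _).2 ⟨m, rfl⟩, by rw [dist_eq_D hn]; simp [D, ea, ec]⟩
  refine le_antisymm (Nat.sInf_le hmem) (le_csInf ⟨2, hmem⟩ ?_)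
  rintro d ⟨w, hw, rfl⟩
  obtain ⟨j, rfl⟩ := (central_iff hn hk _).1 hw
  rw [dist_eq_D hn]
  simp only [D, ea, ec]
  split_ifs <;> omega

lemma totalLevel_eq (hn : 5 ≤ n) (hk : 4 ≤ k) :
    totalLevel (LG n k) = n + (n*(k-2))*2 := by
  unfold totalLevel
  rw [← Fintype.sum_bijective toE toE_bijective (fun x => level (LG n k) (toE x)) _
    (fun x => rfl)]
  rw [Fintype.sum_sum_type, Fintype.sum_sum_type]
  simp only [level_a hn hk, level_b hn hk, level_c hn hk]
  simp [Finset.sum_const, Finset.card_univ, mul_comm]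

lemma card_edgeSet (hn : 5 ≤ n) (hk : 4 ≤ k) :
    Fintype.card ((bananaTree n k).edgeSet) = n + (n + n*(k-2)) := by
  rw [← Fintype.card_congr (Equiv.ofBijective toE toE_bijective)]
  simp

lemma diam_eq (hn : 5 ≤ n) (hk : 4 ≤ k) : diam (LG n k) = 5 := by
  refine le_antisymm (Finset.sup_le ?_) ?_
  · rintro ⟨u, v⟩ _
    obtain ⟨x, rfl⟩ := toE_bijective.2 u
    obtain ⟨y, rfl⟩ := toE_bijective.2 v
    rw [dist_eq_D hn]
    exact D_le_five x y
  · have t0 : Fin (k-2) := ⟨0, by omega⟩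
    have key : (LG n k).dist (toE (ec (i0 hn) t0)) (toE (ec ⟨1, by omega⟩ t0)) = 5 := by
      rw [dist_eq_D hn]
      simp [D, ec, i0, Fin.ext_iff]
    calc (5:ℕ) = (LG n k).dist (toE (ec (i0 hn) t0)) (toE (ec ⟨1, by omega⟩ t0)) := key.symm
      _ ≤ diam (LG n k) :=
        Finset.le_sup (f := fun p : _ × _ => (LG n k).dist p.1 p.2)
          (Finset.mem_univ (toE (ec (i0 hn) t0), toE (ec ⟨1, by omega⟩ t0)))


def lvlE : EE n k → ℕ
  | ea _ => 0
  | eb _ => 1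
  | ec _ _ => 2

lemma level_toE (hn : 5 ≤ n) (hk : 4 ≤ k) (x : EE n k) :
    level (LG n k) (toE x) = lvlE x := by
  obtain ⟨i⟩ | ⟨i⟩ | ⟨i, t⟩ := x
  · exact level_a hn hk i
  · exact level_b hn hk i
  · exact level_c hn hk i t

lemma D_le_lvl (x y : EE n k) : D x y ≤ lvlE x + lvlE y + 1 := by
  obtain ⟨i⟩ | ⟨i⟩ | ⟨i, t⟩ := x <;> obtain ⟨j⟩ | ⟨j⟩ | ⟨j, s⟩ := y <;>
    simp only [D, lvlE, ea, eb, ec] <;> split_ifs <;> omega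

lemma dist_le_five (hn : 5 ≤ n) (u v : (bananaTree n k).edgeSet) :
    (LG n k).dist u v ≤ 5 := by
  obtain ⟨x, rfl⟩ := toE_bijective.2 u
  obtain ⟨y, rfl⟩ := toE_bijective.2 v
  rw [dist_eq_D hn]
  exact D_le_five x y

lemma radio_injective (hn : 5 ≤ n) (hk : 4 ≤ k) {f : (bananaTree n k).edgeSet → ℕ}
    (hf : IsRadioLabeling (LG n k) f) : Function.Injective f := by
  intro u v huv
  by_contra hne
  have := hf u v hne
  rw [diam_eq hn hk, huv] at this
  simp at this
  have h5 := dist_le_five hn u v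
  omega

lemma rn_lower (hn : 5 ≤ n) (hk : 4 ≤ k) {f : (bananaTree n k).edgeSet → ℕ}
    (hf : IsRadioLabeling (LG n k) f) :
    n*k + 6*n - 5 ≤ span f := by
  classical
  obtain ⟨q, hqdef⟩ : ∃ q, q = Fintype.card ((bananaTree n k).edgeSet) := ⟨_, rfl⟩
  have hq : q = n + (n + n*(k-2)) := by rw [hqdef]; exact card_edgeSet hn hk
  have hq5 : 5 ≤ q := by
    have : n ≤ n + (n + n*(k-2)) := by omega
    omega
  have finj : Function.Injective f := radio_injective hn hk hf
  -- sorted enumeration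
  have hcard : (Finset.univ.image f).card = q := by
    rw [Finset.card_image_of_injective _ finj, Finset.card_univ, ← hqdef]
  set o := (Finset.univ.image f).orderIsoOfFin hcard with hodef
  have hVne : Nonempty ((bananaTree n k).edgeSet) := Fintype.card_pos_iff.1 (by omega)
  set x : Fin q → (bananaTree n k).edgeSet := fun i => Function.invFun f (o i : ℕ) with hxdef
  have hfx : ∀ i, f (x i) = (o i : ℕ) := by
    intro i
    have hmem : (o i : ℕ) ∈ Finset.univ.image f := (o i).2
    obtain ⟨v, _, hv⟩ := Finset.mem_image.1 hmem
    exact Function.invFun_eq ⟨v, hv⟩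
  have hxinj : Function.Injective x := by
    intro i j h
    have : (o i : ℕ) = (o j : ℕ) := by rw [← hfx i, ← hfx j, h]
    exact o.injective (Subtype.ext this)
  have hxbij : Function.Bijective x :=
    (Fintype.bijective_iff_injective_and_card x).2 ⟨hxinj, by simp [← hqdef]⟩
  have hxmono : ∀ {i j : Fin q}, i < j → f (x i) < f (x j) := by
    intro i j hij
    rw [hfx i, hfx j]
    exact o.strictMono hij
  -- index as naturals
  set y : ℕ → (bananaTree n k).edgeSet := fun i => x ⟨min i (q-1), by omega⟩ with hydef
  set F : ℕ → ℤ := fun i => (f (y i) : ℤ) with hFdef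
  set L : ℕ → ℤ := fun i => (level (LG n k) (y i) : ℤ) with hLdef
  have hLnonneg : ∀ i, 0 ≤ L i := fun i => Int.ofNat_nonneg _
  have hymin : ∀ (i : ℕ) (hi : i ≤ q - 1), y i = x ⟨i, by omega⟩ := by
    intro i hi
    simp only [hydef]
    congr 1
    exact Fin.ext (by simp [min_eq_left hi])
  -- consecutive steps
  have hstep : ∀ i, i < q - 1 → 5 - L i - L (i+1) ≤ F (i+1) - F i := by
    intro i hi
    have hyi : y i = x ⟨i, by omega⟩ := hymin i (by omega)
    have hyi1 : y (i+1) = x ⟨i+1, by omega⟩ := hymin (i+1) (by omega)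
    have hij : (⟨i, by omega⟩ : Fin q) < ⟨i+1, by omega⟩ := by
      simp [Fin.lt_def]
    have hmono := hxmono hij
    have hne : y i ≠ y (i+1) := by
      rw [hyi, hyi1]
      intro h
      have := hxinj h
      simp [Fin.ext_iff] at this
    have hradio := hf (y i) (y (i+1)) hne
    rw [diam_eq hn hk] at hradio
    have hlt : f (y i) < f (y (i+1)) := by rw [hyi, hyi1]; exact hmono
    have hmax : max (f (y i) - f (y (i+1))) (f (y (i+1)) - f (y i))
        = f (y (i+1)) - f (y i) := by omega
    rw [hmax] at hradio
    -- dist bound via levels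
    have hdist : (LG n k).dist (y i) (y (i+1)) ≤
        level (LG n k) (y i) + level (LG n k) (y (i+1)) + 1 := by
      obtain ⟨a, ha⟩ := toE_bijective.2 (y i)
      obtain ⟨b, hb⟩ := toE_bijective.2 (y (i+1))
      rw [← ha, ← hb, dist_eq_D hn, level_toE hn hk, level_toE hn hk]
      exact D_le_lvl a b
    have hcast : (f (y (i+1)) - f (y i) : ℕ) = (F (i+1) - F i : ℤ) := by
      simp only [hFdef]
      omega
    simp only [hLdef]
    omega
  -- telescoping
  have htel : ∑ i ∈ Finset.range (q-1), (F (i+1) - F i) = F (q-1) - F 0 :=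
    Finset.sum_range_sub F (q-1)
  have hsum1 : ∑ i ∈ Finset.range (q-1), (5 - L i - L (i+1)) ≤ F (q-1) - F 0 := by
    rw [← htel]
    exact Finset.sum_le_sum (fun i hi => hstep i (Finset.mem_range.1 hi))
  -- level sums
  have hLsum : ∑ i ∈ Finset.range q, L i = (totalLevel (LG n k) : ℤ) := by
    unfold totalLevel
    push_cast
    rw [← Fin.sum_univ_eq_sum_range]
    refine Fintype.sum_bijective x hxbij _ _ (fun i => ?_)
    simp only [hLdef]
    have hyy : y ↑i = x i := by
      rw [hymin ↑i (by have := i.isLt; omega)]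
    rw [hyy]
  have hmono1 : ∑ i ∈ Finset.range (q-1), L i ≤ (totalLevel (LG n k) : ℤ) := by
    rw [← hLsum]
    exact Finset.sum_le_sum_of_subset_of_nonneg
      (Finset.range_subset_range.2 (by omega)) (fun i _ _ => hLnonneg i)
  have hmono2 : ∑ i ∈ Finset.range (q-1), L (i+1) ≤ (totalLevel (LG n k) : ℤ) := by
    have : ∑ i ∈ Finset.range (q-1), L (i+1)
        = ∑ i ∈ Finset.Ico 1 q, L i := by
      rw [Finset.sum_Ico_eq_sum_range]
      refine Finset.sum_congr (by congr 1) (fun i _ => by rw [add_comm])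
    rw [this, ← hLsum]
    exact Finset.sum_le_sum_of_subset_of_nonneg
      (by intro a ha; simp at ha ⊢; omega) (fun i _ _ => hLnonneg i)
  have hexp : ∑ i ∈ Finset.range (q-1), ((5:ℤ) - L i - L (i+1))
      = 5*((q:ℤ)-1) - ∑ i ∈ Finset.range (q-1), L i - ∑ i ∈ Finset.range (q-1), L (i+1) := by
    rw [Finset.sum_sub_distrib, Finset.sum_sub_distrib, Finset.sum_const, Finset.card_range,
      nsmul_eq_mul]
    have hc : ((q-1:ℕ):ℤ) = (q:ℤ)-1 := by omega
    rw [hc]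
    ring
  -- span bound
  have hspan : (F (q-1) - F 0 : ℤ) ≤ (span f : ℤ) := by
    have hle : f (y 0) ≤ f (y (q-1)) := by
      rcases Nat.lt_or_ge 0 (q-1) with h | h
      · exact le_of_lt (by
          rw [hymin 0 (by omega), hymin (q-1) (le_refl _)]
          exact hxmono (by simp [Fin.lt_def]; omega))
      · exact absurd h (by omega)
    have hsub : span f ≥ f (y (q-1)) - f (y 0) := by
      unfold span
      exact Finset.le_sup (f := fun p : _ × _ => f p.1 - f p.2)
        (Finset.mem_univ (y (q-1), y 0))
    simp only [hFdef]
    omega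
  have hTL : totalLevel (LG n k) = n + (n*(k-2))*2 := totalLevel_eq hn hk
  have hfinal : (5:ℤ)*((q:ℤ)-1) - 2*(totalLevel (LG n k) : ℤ) ≤ (span f : ℤ) := by
    calc (5:ℤ)*((q:ℤ)-1) - 2*(totalLevel (LG n k) : ℤ)
        ≤ ∑ i ∈ Finset.range (q-1), ((5:ℤ) - L i - L (i+1)) := by
          rw [hexp]
          linarith [hmono1, hmono2]
      _ ≤ F (q-1) - F 0 := hsum1
      _ ≤ (span f : ℤ) := hspan
  have harith : (5:ℤ)*((q:ℤ)-1) - 2*(totalLevel (LG n k) : ℤ)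
      = ((n*k + 6*n - 5 : ℕ) : ℤ) := by
    obtain ⟨k', rfl⟩ : ∃ k', k = k' + 4 := ⟨k - 4, by omega⟩
    rw [hTL, hq]
    have e1 : k' + 4 - 2 = k' + 2 := by omega
    rw [e1]
    have h5' : (5:ℕ) ≤ n*(k'+4) + 6*n := by nlinarith
    rw [Nat.cast_sub h5']
    push_cast
    ring
  have := hfinal
  rw [harith] at this
  exact_mod_cast this


/-- label value at position `p` (with `M` abstracting `n*(k-2)`) -/
def FFa (M n p : ℕ) : ℕ :=
  if p = 0 then 0
  else if p ≤ M then p + 2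
  else if p ≤ M + n then 3*p + 1 - 2*M
  else 5*p - 4*M - 2*n

/-- level of the vertex at position `p` -/
def lla (M n p : ℕ) : ℕ :=
  if p = 0 then 0 else if p ≤ M then 2 else if p ≤ M + n then 1 else 0

lemma FA {M n : ℕ} (hM : 2*n ≤ M) (hn : 5 ≤ n) {p q : ℕ} (hpq : p ≤ q)
    (hq : q ≤ M + 2*n - 1) : FFa M n p + (q - p) ≤ FFa M n q := by
  unfold FFa
  split_ifs <;> omega

lemma FB {M n : ℕ} (hM : 2*n ≤ M) (hn : 5 ≤ n) {p q : ℕ} (h1 : p < q) (h2 : q ≤ p + 4)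
    (hq : q ≤ M + 2*n - 1) :
    FFa M n p + (q - p) + 4 ≤ FFa M n q + lla M n p + lla M n q := by
  unfold FFa lla
  split_ifs <;> omega

lemma Fmax {M n : ℕ} (hM : 2*n ≤ M) (hn : 5 ≤ n) {p : ℕ} (hp : p ≤ M + 2*n - 1) :
    FFa M n p ≤ M + 8*n - 5 := by
  unfold FFa
  split_ifs <;> omega

/-- position of each vertex in the labeling order -/
def posE : EE n k → ℕ
  | ea i => if (i : ℕ) = 0 then 0 else n*(k-2) + n + i
  | eb i => n*(k-2) + (if (i : ℕ) = 0 then n else i)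
  | ec i t => (t : ℕ) * n + (if (i : ℕ) = 0 then n else i)

def banE : EE n k → ℕ
  | ea i => i
  | eb i => i
  | ec i _ => i

lemma posE_le (hk : 4 ≤ k) (x : EE n k) : posE x ≤ n*(k-2) + 2*n - 1 := by
  obtain ⟨i⟩ | ⟨i⟩ | ⟨i, t⟩ := x <;> simp only [posE, ea, eb, ec]
  · have := i.isLt
    split_ifs <;> omega
  · have := i.isLt
    split_ifs <;> omega
  · have hi := i.isLt
    have ht := t.isLt
    have hmul : ((t:ℕ)+1) * n ≤ (k-2) * n := Nat.mul_le_mul_right n (by omega)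
    have heq : n * (k-2) = (k-2) * n := Nat.mul_comm _ _
    rw [heq]
    set A := (t:ℕ) * n with hA
    have hA1 : (t:ℕ) * n + n = ((t:ℕ)+1) * n := by ring
    set B := (k-2) * n with hB
    split_ifs <;> omega

lemma posE_mod (hn : 5 ≤ n) (x : EE n k) : posE x % n = banE x := by
  obtain ⟨i⟩ | ⟨i⟩ | ⟨i, t⟩ := x <;> simp only [posE, banE, ea, eb, ec]
  · have := i.isLt
    split_ifs with h
    · simp [h]
    · have : n*(k-2) + n + (i:ℕ) = (i:ℕ) + (k-2+1) * n := by ring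
      rw [this, Nat.add_mul_mod_self_right, Nat.mod_eq_of_lt i.isLt]
  · have := i.isLt
    split_ifs with h
    · have : n*(k-2) + n = 0 + (k-2+1) * n := by ring
      rw [this, Nat.add_mul_mod_self_right]
      simp [h]
    · have : n*(k-2) + (i:ℕ) = (i:ℕ) + (k-2) * n := by ring
      rw [this, Nat.add_mul_mod_self_right, Nat.mod_eq_of_lt i.isLt]
  · have := i.isLt
    split_ifs with h
    · have : (t:ℕ) * n + n = 0 + ((t:ℕ)+1) * n := by ring
      rw [this, Nat.add_mul_mod_self_right]
      simp [h]
    · have : (t:ℕ) * n + (i:ℕ) = (i:ℕ) + (t:ℕ) * n := by ring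
      rw [this, Nat.add_mul_mod_self_right, Nat.mod_eq_of_lt i.isLt]

lemma pos_range_c (hk : 4 ≤ k) (hn : 5 ≤ n) (i : Fin n) (t : Fin (k-2)) :
    1 ≤ posE (ec i t) ∧ posE (ec i t) ≤ n*(k-2) := by
  simp only [posE, ec]
  have hi := i.isLt
  have ht := t.isLt
  have hmul : ((t:ℕ)+1) * n ≤ (k-2) * n := Nat.mul_le_mul_right n (by omega)
  have heq : n * (k-2) = (k-2) * n := Nat.mul_comm _ _
  rw [heq]
  have hA1 : (t:ℕ) * n + n = ((t:ℕ)+1) * n := by ring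
  set A := (t:ℕ) * n with hA
  set B := (k-2) * n with hB
  split_ifs <;> omega

lemma pos_range_b (hn : 5 ≤ n) (i : Fin n) :
    n*(k-2) + 1 ≤ posE (eb i : EE n k) ∧ posE (eb i : EE n k) ≤ n*(k-2) + n := by
  simp only [posE, eb]
  have := i.isLt
  split_ifs <;> omega

lemma pos_range_a (hn : 5 ≤ n) (i : Fin n) :
    posE (ea i : EE n k) = 0 ∨
      (n*(k-2) + n + 1 ≤ posE (ea i : EE n k) ∧ posE (ea i : EE n k) ≤ n*(k-2) + 2*n - 1) := by
  simp only [posE, ea]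
  have := i.isLt
  split_ifs with h
  · exact Or.inl rfl
  · right; omega

lemma pos_lvl (hk : 4 ≤ k) (hn : 5 ≤ n) (x : EE n k) :
    lla (n*(k-2)) n (posE x) = lvlE x := by
  have hM : 2*n ≤ n*(k-2) := by
    calc 2*n = n*2 := by ring
    _ ≤ n*(k-2) := Nat.mul_le_mul_left n (by omega)
  obtain ⟨i⟩ | ⟨i⟩ | ⟨i, t⟩ := x
  · rcases pos_range_a (k := k) hn i with h | h <;>
      (simp only [ea] at h; simp only [lla, lvlE, ea]; split_ifs <;> omega)
  · have h := pos_range_b (k := k) hn i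
    simp only [eb] at h
    simp only [lla, lvlE, eb]
    split_ifs <;> omega
  · have h := pos_range_c hk hn i t
    simp only [ec] at h
    simp only [lla, lvlE, ec]
    split_ifs <;> omega

lemma posE_inj (hk : 4 ≤ k) (hn : 5 ≤ n) : Function.Injective (posE : EE n k → ℕ) := by
  intro x y h
  have hban : banE x = banE y := by
    rw [← posE_mod hn x, ← posE_mod hn y, h]
  obtain ⟨i⟩ | ⟨i⟩ | ⟨i, t⟩ := x <;> obtain ⟨j⟩ | ⟨j⟩ | ⟨j, s⟩ := y
  · have hij : (i:ℕ) = (j:ℕ) := hban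
    exact congrArg _ (Fin.ext hij)
  · exfalso
    have hb := pos_range_b (k := k) hn j
    rcases pos_range_a (k := k) hn i with h0 | h0 <;>
      (simp only [ea, eb] at h0 hb h; omega)
  · exfalso
    have hc := pos_range_c hk hn j s
    rcases pos_range_a (k := k) hn i with h0 | h0 <;>
      (simp only [ea, ec] at h0 hc h; omega)
  · exfalso
    have hb := pos_range_b (k := k) hn i
    rcases pos_range_a (k := k) hn j with h0 | h0 <;>
      (simp only [ea, eb] at h0 hb h; omega)
  · have hij : (i:ℕ) = (j:ℕ) := hban
    exact congrArg _ (congrArg _ (Fin.ext hij))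
  · exfalso
    have hb := pos_range_b (k := k) hn i
    have hc := pos_range_c hk hn j s
    simp only [eb, ec] at hb hc h
    omega
  · exfalso
    have hc := pos_range_c hk hn i t
    rcases pos_range_a (k := k) hn j with h0 | h0 <;>
      (simp only [ea, ec] at h0 hc h; omega)
  · exfalso
    have hb := pos_range_b (k := k) hn j
    have hc := pos_range_c hk hn i t
    simp only [eb, ec] at hb hc h
    omega
  · have hij : (i:ℕ) = (j:ℕ) := hban
    have hfin : i = j := Fin.ext hij
    subst hfin
    simp only [posE, ec] at h
    have hts : (t:ℕ) * n = (s:ℕ) * n := by omega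
    have hts2 : (t:ℕ) = (s:ℕ) := Nat.eq_of_mul_eq_mul_right (by omega) hts
    have : t = s := Fin.ext hts2
    rw [this]

lemma ban_ne_of_pos (hk : 4 ≤ k) (hn : 5 ≤ n) {x y : EE n k}
    (h1 : posE x < posE y) (h2 : posE y ≤ posE x + 4) : banE x ≠ banE y := by
  intro heq
  have hmx := posE_mod hn x
  have hmy := posE_mod hn y
  have hmod : posE x % n = posE y % n := by rw [hmx, hmy, heq]
  set p := posE x
  set q := posE y
  have hp := Nat.div_add_mod p n
  have hq := Nat.div_add_mod q n
  have hab : p / n < q / n ∨ q / n ≤ p / n := by omega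
  rcases Nat.lt_or_ge (p / n) (q / n) with hlt | hge
  · have : n * (p / n + 1) ≤ n * (q / n) := Nat.mul_le_mul_left n hlt
    have hdist : n * (p / n + 1) = n * (p / n) + n := by ring
    omega
  · have : n * (q / n) ≤ n * (p / n) := Nat.mul_le_mul_left n hge
    omega

lemma D_cross {x y : EE n k} (h : banE x ≠ banE y) : D x y = lvlE x + lvlE y + 1 := by
  have hfin : ∀ (i j : Fin n), (i:ℕ) ≠ (j:ℕ) → i ≠ j := fun i j hij hc => hij (by rw [hc])
  obtain ⟨i⟩ | ⟨i⟩ | ⟨i, t⟩ := x <;> obtain ⟨j⟩ | ⟨j⟩ | ⟨j, s⟩ := y <;>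
    simp only [banE, ea, eb, ec] at h <;>
    simp only [D, lvlE, ea, eb, ec] <;>
    rw [if_neg (fun hc => h (by rw [hc]))]


noncomputable def flab : (bananaTree n k).edgeSet → ℕ :=
  fun v => FFa (n*(k-2)) n (posE ((Equiv.ofBijective toE toE_bijective).symm v))

lemma hM_of (hn : 5 ≤ n) (hk : 4 ≤ k) : 2*n ≤ n*(k-2) := by
  calc 2*n = n*2 := by ring
  _ ≤ n*(k-2) := Nat.mul_le_mul_left n (by omega)

lemma aux_radio (hk : 4 ≤ k) (hn : 5 ≤ n) {x y : EE n k} (hlt : posE x < posE y) :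
    6 ≤ D x y + (FFa (n*(k-2)) n (posE y) - FFa (n*(k-2)) n (posE x)) := by
  have hM := hM_of hn hk
  have hqle := posE_le hk y
  have hxy : x ≠ y := fun h => by rw [h] at hlt; omega
  by_cases h4 : posE y ≤ posE x + 4
  · have hban := ban_ne_of_pos hk hn hlt h4
    have hD := D_cross hban
    have hFB := FB hM hn hlt h4 hqle
    have hl1 := pos_lvl hk hn x
    have hl2 := pos_lvl hk hn y
    have hl1' : lvlE x ≤ 2 := by
      obtain ⟨i⟩ | ⟨i⟩ | ⟨i, t⟩ := x <;> simp [lvlE, ea, eb, ec]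
    have hl2' : lvlE y ≤ 2 := by
      obtain ⟨i⟩ | ⟨i⟩ | ⟨i, t⟩ := y <;> simp [lvlE, ea, eb, ec]
    omega
  · have hFA := FA hM hn (le_of_lt hlt) hqle
    have hD1 : 1 ≤ D x y := D_pos x y hxy
    omega

lemma radio_flab (hn : 5 ≤ n) (hk : 4 ≤ k) : IsRadioLabeling (LG n k) (flab : _) := by
  intro u v hne
  rw [diam_eq hn hk]
  set e := Equiv.ofBijective (toE : EE n k → _) toE_bijective with hedef
  have hu : toE (e.symm u) = u := e.apply_symm_apply u
  have hv : toE (e.symm v) = v := e.apply_symm_apply v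
  set x := e.symm u with hx
  set y := e.symm v with hy
  have hxy : x ≠ y := fun h => hne (by rw [← hu, ← hv, h])
  have hdist : (LG n k).dist u v = D x y := by rw [← hu, ← hv, dist_eq_D hn]
  have hflabu : flab u = FFa (n*(k-2)) n (posE x) := rfl
  have hflabv : flab v = FFa (n*(k-2)) n (posE y) := rfl
  rcases lt_trichotomy (posE x) (posE y) with hlt | heq | hgt
  · have haux := aux_radio hk hn hlt
    have hle : FFa (n*(k-2)) n (posE x) ≤ FFa (n*(k-2)) n (posE y) := by
      have := FA (hM_of hn hk) hn (le_of_lt hlt) (posE_le hk y)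
      omega
    rw [hdist, hflabu, hflabv]
    omega
  · exact absurd (posE_inj hk hn heq) hxy
  · have haux := aux_radio hk hn hgt
    have hle : FFa (n*(k-2)) n (posE y) ≤ FFa (n*(k-2)) n (posE x) := by
      have := FA (hM_of hn hk) hn (le_of_lt hgt) (posE_le hk x)
      omega
    rw [hdist, hflabu, hflabv, D_comm]
    omega

lemma span_flab (hn : 5 ≤ n) (hk : 4 ≤ k) :
    span (flab : (bananaTree n k).edgeSet → ℕ) ≤ n*(k-2) + 8*n - 5 := by
  refine Finset.sup_le ?_
  rintro ⟨u, v⟩ _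
  refine le_trans (Nat.sub_le _ _) ?_
  exact Fmax (hM_of hn hk) hn (posE_le hk _)

lemma rn_eq (hn : 5 ≤ n) (hk : 4 ≤ k) : rn (LG n k) = n*k + 6*n - 5 := by
  have hmem : span (flab : (bananaTree n k).edgeSet → ℕ) ∈
      {s | ∃ f, IsRadioLabeling (LG n k) f ∧ span f = s} := ⟨flab, radio_flab hn hk, rfl⟩
  have hident : n*(k-2) + 8*n - 5 = n*k + 6*n - 5 := by
    obtain ⟨k', rfl⟩ : ∃ k', k = k' + 4 := ⟨k - 4, by omega⟩
    have h1 : k' + 4 - 2 = k' + 2 := by omega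
    rw [h1]
    have h2 : n*(k'+2) + 8*n = n*(k'+4) + 6*n := by ring
    omega
  refine le_antisymm ?_ ?_
  · refine le_trans (Nat.sInf_le hmem) ?_
    rw [← hident]
    exact span_flab hn hk
  · exact le_csInf ⟨_, hmem⟩ (by rintro s ⟨f, hf, rfl⟩; exact rn_lower hn hk hf)

theorem stmt18' (hn : 5 ≤ n) (hk : 4 ≤ k) :
    IsLowerBoundBlockGraph (SimpleGraph.lineGraph (bananaTree n k)) ∧
    (rn (SimpleGraph.lineGraph (bananaTree n k)) : ℤ) = (n : ℤ) * ((k : ℤ) + 6) - 5 := by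
  have hval : (rn (LG n k) : ℤ) = (n : ℤ) * ((k : ℤ) + 6) - 5 := by
    rw [rn_eq hn hk]
    have h5 : (5:ℕ) ≤ n*k + 6*n := by nlinarith
    rw [Nat.cast_sub h5]
    push_cast
    ring
  refine ⟨⟨lg_isBlockGraph hn, ?_⟩, hval⟩
  unfold lbEq
  rw [hval, card_edgeSet hn hk, diam_eq hn hk, eps_eq hn hk, totalLevel_eq hn hk]
  obtain ⟨k', rfl⟩ : ∃ k', k = k' + 4 := ⟨k - 4, by omega⟩
  have h1 : k' + 4 - 2 = k' + 2 := by omega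
  rw [h1]
  push_cast
  ring


end Banana

/-- for `n ≥ 5` and `k ≥ 4`, the line graph of the `(n,k)`-banana tree is a
lower bound block graph and `rn(𝓛(B(n,k))) = n(k+6) - 5`. -/
theorem stmt18 (n k : ℕ) (hn : 5 ≤ n) (hk : 4 ≤ k) :
    IsLowerBoundBlockGraph (SimpleGraph.lineGraph (bananaTree n k)) ∧
    (rn (SimpleGraph.lineGraph (bananaTree n k)) : ℤ) = (n : ℤ) * ((k : ℤ) + 6) - 5 :=
  stmt18' hn hk

end RadioLabeling
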